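/- With G, C1, C2, α_1, α_2 as in the context (in particular G has no universal vertex), if α_1 = α_2 = 1 and |C1| ≥ 2 and |C2| ≥ 2, then G has a 2-tuple dominating set and γ×2(G) = 4. -/

import Mathlib

open Set

/-- The closed neighborhood `N[v]` of a vertex `v`: `v` together with its neighbors. -/
def closedNbhd {V : Type*} (G : SimpleGraph V) (v : V) : Set V :=
  insert v {w | G.Adj v w}

/-- `D` is a `k`-tuple dominating set of `G`: every vertex has at least `k` members of `D`
in its closed neighborhood. -/
def IsKTupleDomSet {V : Type*} (G : SimpleGraph V) (k : ℕ) (D : Set V) : Prop :=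
  ∀ v : V, k ≤ (closedNbhd G v ∩ D).ncard

/-- `γ×k(G)`: the minimum cardinality of a `k`-tuple dominating set of `G`. -/
noncomputable def gammaTuple {V : Type*} (G : SimpleGraph V) (k : ℕ) : ℕ :=
  sInf {n | ∃ D : Set V, IsKTupleDomSet G k D ∧ D.ncard = n}

/-- A vertex is universal if its closed neighborhood is the whole vertex set. -/
def IsUniversalVertex {V : Type*} (G : SimpleGraph V) (u : V) : Prop :=
  closedNbhd G u = Set.univ

/-- The non-neighbor set `N̄(v) = V \ N[v]`. -/
def nonNbhd {V : Type*} (G : SimpleGraph V) (v : V) : Set V :=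
  (closedNbhd G v)ᶜ

/-- `S` is a stable set of the auxiliary interval graph `H_i`: the non-neighbor sets of the
vertices of `S` are pairwise disjoint. -/
def IsC0PStable {V : Type*} (G : SimpleGraph V) (S : Set V) : Prop :=
  S.Pairwise fun u w => Disjoint (nonNbhd G u) (nonNbhd G w)

lemma mem_closedNbhd_comm {V : Type*} {G : SimpleGraph V} {u v : V} :
    u ∈ closedNbhd G v ↔ v ∈ closedNbhd G u := by
  simp only [closedNbhd, Set.mem_insert_iff, Set.mem_setOf_eq, G.adj_comm]
  tauto

lemma helly {V : Type*} [Fintype V] [LinearOrder V] (G : SimpleGraph V) (A B : Set V)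
    (hAB : ∀ v ∈ A, nonNbhd G v ⊆ B)
    (hneA : A.Nonempty)
    (hint : ∀ v ∈ A, (nonNbhd G v).Nonempty ∧
      ∀ a ∈ B, ∀ b ∈ B, ∀ c ∈ B, a ≤ b → b ≤ c →
        a ∈ nonNbhd G v → c ∈ nonNbhd G v → b ∈ nonNbhd G v)
    (hpair : ∀ u ∈ A, ∀ w ∈ A, (nonNbhd G u ∩ nonNbhd G w).Nonempty) :
    ∃ y, ∀ v ∈ A, y ∈ nonNbhd G v := by
  have hmin : ∀ v ∈ A, ∃ m, m ∈ nonNbhd G v ∧ ∀ x ∈ nonNbhd G v, m ≤ x := by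
    intro v hv
    obtain ⟨m, hm, hm2⟩ := Set.exists_min_image (nonNbhd G v) id (Set.toFinite _) (hint v hv).1
    exact ⟨m, hm, hm2⟩
  choose! f hf1 hf2 using hmin
  obtain ⟨v0, hv0, hmax⟩ := Set.exists_max_image A f (Set.toFinite _) hneA
  refine ⟨f v0, fun w hw => ?_⟩
  obtain ⟨z, hzu, hzw⟩ := hpair v0 hv0 w hw
  exact (hint w hw).2 (f w) (hAB w hw (hf1 w hw)) (f v0) (hAB v0 hv0 (hf1 v0 hv0))
    z (hAB w hw hzw) (hmax w hw) (hf2 v0 hv0 z hzu) (hf1 w hw) hzw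

/-- in a C0P-graph with no universal vertices, if `α1 = α2 = 1`, `|C1| ≥ 2` and
`|C2| ≥ 2`, then `G` has a `2`-tuple dominating set and `γ×2(G) = 4`. -/
theorem stmt10 {V : Type*} [Fintype V] [LinearOrder V] (G : SimpleGraph V) (C1 C2 : Set V)
    (hd12 : Disjoint C1 C2) (hunion : C1 ∪ C2 = Set.univ)
    (hne1 : C1.Nonempty) (hne2 : C2.Nonempty)
    (hcl1 : G.IsClique C1) (hcl2 : G.IsClique C2)
    (hnouniv : ∀ v : V, ¬ IsUniversalVertex G v)
    (hint1 : ∀ v ∈ C1, (nonNbhd G v).Nonempty ∧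
      ∀ a ∈ C2, ∀ b ∈ C2, ∀ c ∈ C2, a ≤ b → b ≤ c →
        a ∈ nonNbhd G v → c ∈ nonNbhd G v → b ∈ nonNbhd G v)
    (hint2 : ∀ v ∈ C2, (nonNbhd G v).Nonempty ∧
      ∀ a ∈ C1, ∀ b ∈ C1, ∀ c ∈ C1, a ≤ b → b ≤ c →
        a ∈ nonNbhd G v → c ∈ nonNbhd G v → b ∈ nonNbhd G v)
    (α1 α2 : ℕ)
    (hα1 : IsGreatest {n | ∃ S : Set V, S ⊆ C1 ∧ IsC0PStable G S ∧ S.ncard = n} α1)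
    (hα2 : IsGreatest {n | ∃ S : Set V, S ⊆ C2 ∧ IsC0PStable G S ∧ S.ncard = n} α2)
    (h1 : α1 = 1) (h2 : α2 = 1) (hc1 : 2 ≤ C1.ncard) (hc2 : 2 ≤ C2.ncard) :
    (∃ D : Set V, IsKTupleDomSet G 2 D) ∧ gammaTuple G 2 = 4 := by
  have hmemU : ∀ x : V, x ∈ C1 ∨ x ∈ C2 := by
    intro x
    have : x ∈ C1 ∪ C2 := hunion ▸ Set.mem_univ x
    exact this
  -- non-neighborhoods lie in the opposite clique
  have hsub : ∀ (A B : Set V), G.IsClique A → (∀ x : V, x ∈ A ∨ x ∈ B) →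
      ∀ v ∈ A, nonNbhd G v ⊆ B := by
    intro A B hcl hAB v hv w hw
    rcases hAB w with h | h
    · exfalso
      have hw' : ¬ (w = v ∨ G.Adj v w) := by
        simpa [nonNbhd, closedNbhd] using hw
      rcases eq_or_ne w v with rfl | hne
      · exact hw' (Or.inl rfl)
      · exact hw' (Or.inr (hcl hv h hne.symm))
    · exact h
  have hsub1 : ∀ v ∈ C1, nonNbhd G v ⊆ C2 := hsub C1 C2 hcl1 hmemU
  have hsub2 : ∀ v ∈ C2, nonNbhd G v ⊆ C1 :=
    hsub C2 C1 hcl2 (fun x => (hmemU x).symm)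
  -- pairwise intersection of non-neighborhoods within each clique, from α = 1
  have hpairgen : ∀ (A : Set V) (α : ℕ),
      IsGreatest {n | ∃ S : Set V, S ⊆ A ∧ IsC0PStable G S ∧ S.ncard = n} α → α = 1 →
      (∀ v ∈ A, (nonNbhd G v).Nonempty) →
      ∀ u ∈ A, ∀ w ∈ A, (nonNbhd G u ∩ nonNbhd G w).Nonempty := by
    intro A α hα hα1 hne u hu w hw
    rcases eq_or_ne u w with rfl | hne'
    · simpa using hne u hu
    · by_contra hcon
      have hdisj : Disjoint (nonNbhd G u) (nonNbhd G w) :=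
        Set.disjoint_iff_inter_eq_empty.mpr (Set.not_nonempty_iff_eq_empty.mp hcon)
      have hmem : 2 ∈ {n | ∃ S : Set V, S ⊆ A ∧ IsC0PStable G S ∧ S.ncard = n} := by
        refine ⟨{u, w}, ?_, ?_, Set.ncard_pair hne'⟩
        · intro x hx
          rcases hx with rfl | rfl
          · exact hu
          · exact hw
        · have hs : Symmetric (fun a b : V => Disjoint (nonNbhd G a) (nonNbhd G b)) :=
            fun a b h => h.symm
          exact Set.pairwise_pair.mpr (fun _ => ⟨hdisj, hs hdisj⟩)
      have := hα.2 hmem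
      omega
  have hpair1 := hpairgen C1 α1 hα1 h1 (fun v hv => (hint1 v hv).1)
  have hpair2 := hpairgen C2 α2 hα2 h2 (fun v hv => (hint2 v hv).1)
  obtain ⟨y2, hy2⟩ := helly G C1 C2 hsub1 hne1 hint1 hpair1
  obtain ⟨y1, hy1⟩ := helly G C2 C1 hsub2 hne2 hint2 hpair2
  -- closed neighborhoods of y1, y2 are contained in C1, C2 respectively
  have hNsub : ∀ (A B : Set V) (y : V), (∀ v ∈ A, y ∈ nonNbhd G v) →
      closedNbhd G y ⊆ B ∨ (∃ v ∈ A, v ∈ closedNbhd G y) → True := fun _ _ _ _ _ => trivial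
  have hNy1 : closedNbhd G y1 ⊆ C1 := by
    intro x hx
    rcases hmemU x with h | h
    · exact h
    · exact absurd (mem_closedNbhd_comm.mp hx) (hy1 x h)
  have hNy2 : closedNbhd G y2 ⊆ C2 := by
    intro x hx
    rcases hmemU x with h | h
    · exact absurd (mem_closedNbhd_comm.mp hx) (hy2 x h)
    · exact h
  -- vertices in the same clique are in each other's closed neighborhoods
  have hsame : ∀ (C : Set V), G.IsClique C → ∀ v ∈ C, ∀ x ∈ C, x ∈ closedNbhd G v := by
    intro C hcl v hv x hx
    rcases eq_or_ne x v with rfl | hne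
    · exact Set.mem_insert _ _
    · exact Set.mem_insert_of_mem _ (hcl hv hx hne.symm)
  -- pick two vertices in each clique
  obtain ⟨u1, u2, hu1, hu2, huu⟩ := (Set.one_lt_ncard_iff (Set.toFinite _)).mp (by omega : 1 < C1.ncard)
  obtain ⟨w1, w2, hw1, hw2, hww⟩ := (Set.one_lt_ncard_iff (Set.toFinite _)).mp (by omega : 1 < C2.ncard)
  set D : Set V := {u1, u2} ∪ {w1, w2} with hD
  have hdom : IsKTupleDomSet G 2 D := by
    intro v
    rcases hmemU v with hv | hv
    · have hss : ({u1, u2} : Set V) ⊆ closedNbhd G v ∩ D := by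
        intro x hx
        constructor
        · rcases hx with rfl | rfl
          · exact hsame C1 hcl1 v hv x hu1
          · exact hsame C1 hcl1 v hv x hu2
        · exact Set.mem_union_left _ hx
      calc 2 = ({u1, u2} : Set V).ncard := (Set.ncard_pair huu).symm
        _ ≤ _ := Set.ncard_le_ncard hss (Set.toFinite _)
    · have hss : ({w1, w2} : Set V) ⊆ closedNbhd G v ∩ D := by
        intro x hx
        constructor
        · rcases hx with rfl | rfl
          · exact hsame C2 hcl2 v hv x hw1
          · exact hsame C2 hcl2 v hv x hw2
        · exact Set.mem_union_right _ hx
      calc 2 = ({w1, w2} : Set V).ncard := (Set.ncard_pair hww).symm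
        _ ≤ _ := Set.ncard_le_ncard hss (Set.toFinite _)
  have hcardD : D.ncard = 4 := by
    have hdisjD : Disjoint ({u1, u2} : Set V) {w1, w2} := by
      apply hd12.mono
      · intro x hx; rcases hx with rfl | rfl; exacts [hu1, hu2]
      · intro x hx; rcases hx with rfl | rfl; exacts [hw1, hw2]
    rw [hD, Set.ncard_union_eq hdisjD (Set.toFinite _) (Set.toFinite _),
      Set.ncard_pair huu, Set.ncard_pair hww]
  -- lower bound: every 2-tuple dominating set has at least 4 elements
  have hlow : ∀ D' : Set V, IsKTupleDomSet G 2 D' → 4 ≤ D'.ncard := by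
    intro D' hD'
    have hb1 : 2 ≤ (C1 ∩ D').ncard := by
      calc 2 ≤ (closedNbhd G y1 ∩ D').ncard := hD' y1
        _ ≤ (C1 ∩ D').ncard :=
          Set.ncard_le_ncard (Set.inter_subset_inter_left _ hNy1) (Set.toFinite _)
    have hb2 : 2 ≤ (C2 ∩ D').ncard := by
      calc 2 ≤ (closedNbhd G y2 ∩ D').ncard := hD' y2
        _ ≤ (C2 ∩ D').ncard :=
          Set.ncard_le_ncard (Set.inter_subset_inter_left _ hNy2) (Set.toFinite _)
    have hsplit : D' = (C1 ∩ D') ∪ (C2 ∩ D') := by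
      rw [← Set.union_inter_distrib_right, hunion, Set.univ_inter]
    have hdisj' : Disjoint (C1 ∩ D') (C2 ∩ D') :=
      hd12.mono Set.inter_subset_left Set.inter_subset_left
    calc 4 ≤ (C1 ∩ D').ncard + (C2 ∩ D').ncard := by omega
      _ = ((C1 ∩ D') ∪ (C2 ∩ D')).ncard :=
        (Set.ncard_union_eq hdisj' (Set.toFinite _) (Set.toFinite _)).symm
      _ = D'.ncard := by rw [← hsplit]
  refine ⟨⟨D, hdom⟩, ?_⟩
  have h4mem : 4 ∈ {n | ∃ D : Set V, IsKTupleDomSet G 2 D ∧ D.ncard = n} :=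
    ⟨D, hdom, hcardD⟩
  apply le_antisymm
  · exact Nat.sInf_le h4mem
  · apply le_csInf ⟨4, h4mem⟩
    rintro n ⟨D', hD', rfl⟩
    exact hlow D' hD'
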